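/- arXiv:2605.30535 — 2 statements merged into one kernel-verified Lean document; each statement's English description precedes it below -/
import Mathlib

section
/- Let p, q be distinct prime numbers and let G = ⟨a, s, t | sas⁻¹ = aᵖ, tat⁻¹ = a^q⟩. Then the centraliser of s in G is the cyclic subgroup generated by s, and the centraliser of t in G is the cyclic subgroup generated by t. -/
/-- Generators of the generalised Baumslag–Solitar group
`G = ⟨a, s, t | s a s⁻¹ = aᵖ, t a t⁻¹ = a^q⟩`. -/
inductive Gen
  | a | s | t

/-- Defining relators of `G = ⟨a, s, t | s a s⁻¹ = aᵖ, t a t⁻¹ = a^q⟩`. -/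
def gbsRels (p q : ℕ) : Set (FreeGroup Gen) :=
  { FreeGroup.of Gen.s * FreeGroup.of Gen.a * (FreeGroup.of Gen.s)⁻¹ *
      ((FreeGroup.of Gen.a) ^ p)⁻¹,
    FreeGroup.of Gen.t * FreeGroup.of Gen.a * (FreeGroup.of Gen.t)⁻¹ *
      ((FreeGroup.of Gen.a) ^ q)⁻¹ }

namespace GBS

/-- Relators for `BS(1,r) = ⟨a, s | s a s⁻¹ = a^r⟩`; `false = a`, `true = s`. -/
def bsRels (r : ℕ) : Set (FreeGroup Bool) :=
  {FreeGroup.of true * FreeGroup.of false * (FreeGroup.of true)⁻¹ *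
    ((FreeGroup.of false) ^ r)⁻¹}

abbrev BS (r : ℕ) := PresentedGroup (bsRels r)

def A (r : ℕ) : BS r := PresentedGroup.of false
def S (r : ℕ) : BS r := PresentedGroup.of true

lemma bs_rel (r : ℕ) : S r * A r * (S r)⁻¹ = (A r) ^ r := by
  have h : (PresentedGroup.mk (bsRels r))
      (FreeGroup.of true * FreeGroup.of false * (FreeGroup.of true)⁻¹ *
        ((FreeGroup.of false) ^ r)⁻¹) = 1 := by
    apply (QuotientGroup.eq_one_iff _).2
    exact Subgroup.subset_normalClosure rfl
  simp only [map_mul, map_inv, map_pow] at h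
  have := mul_eq_one_iff_eq_inv.1 h
  simpa [S, A, PresentedGroup.of] using this

lemma bs_rel_zpow (r : ℕ) (k : ℤ) : S r * (A r) ^ k * (S r)⁻¹ = (A r) ^ (k * r) := by
  calc S r * (A r) ^ k * (S r)⁻¹ = (S r * A r * (S r)⁻¹) ^ k := by rw [conj_zpow]
  _ = ((A r) ^ (r : ℤ)) ^ k := by rw [bs_rel]; norm_cast
  _ = (A r) ^ (k * r) := by rw [← zpow_mul, mul_comm]

lemma bs_pow_conj (r : ℕ) (d : ℕ) (k : ℤ) :
    (S r) ^ d * (A r) ^ k * ((S r) ^ d)⁻¹ = (A r) ^ (k * (r : ℤ) ^ d) := by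
  induction d generalizing k with
  | zero => simp
  | succ n ih =>
    have : (S r) ^ (n+1) = S r * (S r) ^ n := by rw [pow_succ']
    rw [this, mul_inv_rev]
    have step : S r * ((S r) ^ n * (A r) ^ k * ((S r) ^ n)⁻¹) * (S r)⁻¹
        = (A r) ^ (k * (r:ℤ) ^ (n+1)) := by
      rw [ih]
      rw [bs_rel_zpow]
      congr 1
      push_cast
      ring
    rw [← step]
    group

lemma spow_apow (r : ℕ) (d : ℕ) (k : ℤ) :
    (S r) ^ d * (A r) ^ k = (A r) ^ (k * (r : ℤ) ^ d) * (S r) ^ d := by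
  rw [← bs_pow_conj]; group

lemma apow_sinv (r : ℕ) (d : ℕ) (k : ℤ) :
    (A r) ^ k * ((S r) ^ d)⁻¹ = ((S r) ^ d)⁻¹ * (A r) ^ (k * (r : ℤ) ^ d) := by
  rw [← bs_pow_conj]; group

/-- Normal-ish form for elements of `BS r`. -/
def nf (r : ℕ) (i : ℕ) (k : ℤ) (j : ℕ) : BS r := ((S r) ^ i)⁻¹ * (A r) ^ k * (S r) ^ j

lemma exists_nf (r : ℕ) (g : BS r) : ∃ i k j, g = nf r i k j := by
  let H : Subgroup (BS r) :=
    { carrier := {g | ∃ i k j, g = nf r i k j}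
      one_mem' := ⟨0, 0, 0, by simp [nf]⟩
      mul_mem' := by
        rintro x y ⟨i, k, j, rfl⟩ ⟨i', k', j', rfl⟩
        rcases le_or_gt i' j with h | h
        · refine ⟨i, k + k' * (r:ℤ) ^ (j - i'), (j - i') + j', ?_⟩
          obtain ⟨d, rfl⟩ : ∃ d, j = i' + d := ⟨j - i', by omega⟩
          simp only [nf, Nat.add_sub_cancel_left]
          rw [pow_add]
          have : (S r) ^ d * (A r) ^ k' = (A r) ^ (k' * (r:ℤ) ^ d) * (S r) ^ d :=
            spow_apow r d k'
          calc ((S r) ^ i)⁻¹ * (A r) ^ k * ((S r) ^ i' * (S r) ^ d) *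
                (((S r) ^ i')⁻¹ * (A r) ^ k' * (S r) ^ j')
              = ((S r) ^ i)⁻¹ * (A r) ^ k * ((S r) ^ d * (A r) ^ k') * (S r) ^ j' := by group
            _ = ((S r) ^ i)⁻¹ * (A r) ^ k * ((A r) ^ (k' * (r:ℤ) ^ d) * (S r) ^ d) *
                  (S r) ^ j' := by rw [this]
            _ = ((S r) ^ i)⁻¹ * (A r) ^ (k + k' * (r:ℤ) ^ d) * ((S r) ^ d * (S r) ^ j') := by
                  rw [zpow_add]; group
            _ = ((S r) ^ i)⁻¹ * (A r) ^ (k + k' * (r:ℤ) ^ d) * (S r) ^ (d + j') := by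
                  rw [pow_add]
        · refine ⟨i + (i' - j), k * (r:ℤ) ^ (i' - j) + k', j', ?_⟩
          obtain ⟨d, rfl⟩ : ∃ d, i' = j + d := ⟨i' - j, by omega⟩
          simp only [nf, Nat.add_sub_cancel_left]
          have hc : (A r) ^ k * ((S r) ^ d)⁻¹ = ((S r) ^ d)⁻¹ * (A r) ^ (k * (r:ℤ) ^ d) :=
            apow_sinv r d k
          calc ((S r) ^ i)⁻¹ * (A r) ^ k * (S r) ^ j *
                (((S r) ^ (j + d))⁻¹ * (A r) ^ k' * (S r) ^ j')
              = ((S r) ^ i)⁻¹ * ((A r) ^ k * ((S r) ^ d)⁻¹) * (A r) ^ k' * (S r) ^ j' := by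
                  rw [pow_add]; group
            _ = ((S r) ^ i)⁻¹ * (((S r) ^ d)⁻¹ * (A r) ^ (k * (r:ℤ) ^ d)) * (A r) ^ k' *
                  (S r) ^ j' := by rw [hc]
            _ = ((S r) ^ (i + d))⁻¹ * (A r) ^ (k * (r:ℤ) ^ d + k') * (S r) ^ j' := by
                  rw [pow_add, zpow_add]; group
      inv_mem' := by
        rintro x ⟨i, k, j, rfl⟩
        exact ⟨j, -k, i, by simp only [nf]; group⟩ }
  have := PresentedGroup.generated_by (bsRels r) H ?_ g
  · exact this
  · intro b
    cases b
    · exact ⟨0, 1, 0, by simp [nf, A]⟩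
    · exact ⟨0, 0, 1, by simp [nf, S]⟩

section Rep

/-- `x ↦ x + 1` -/
def Aρ : Equiv.Perm ℚ := Equiv.addRight (1 : ℚ)

lemma hr0 (r : ℕ) (hr : 2 ≤ r) : (r : ℚ) ≠ 0 := by
  have : 0 < r := lt_of_lt_of_le (by norm_num) hr
  exact_mod_cast this.ne'

/-- `x ↦ r * x` -/
def Sρ (r : ℕ) (hr : 2 ≤ r) : Equiv.Perm ℚ := Equiv.mulLeft₀ (r : ℚ) (hr0 r hr)

lemma Aρ_apply (x : ℚ) : Aρ x = x + 1 := rfl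

lemma Aρ_pow (n : ℕ) (x : ℚ) : ((Aρ) ^ n) x = x + n := by
  induction n with
  | zero => simp
  | succ m ih =>
    rw [pow_succ', Equiv.Perm.mul_apply, ih, Aρ_apply]
    push_cast; ring

lemma Aρ_zpow (n : ℤ) (x : ℚ) : ((Aρ) ^ n) x = x + n := by
  cases n with
  | ofNat m => simpa using Aρ_pow m x
  | negSucc m =>
    have h1 : (Aρ ^ (m+1)) (x - (m+1)) = x := by rw [Aρ_pow]; push_cast; ring
    calc (Aρ ^ Int.negSucc m) x = (Aρ ^ (m+1) : Equiv.Perm ℚ)⁻¹ x := by rw [zpow_negSucc]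
      _ = (Aρ ^ (m+1) : Equiv.Perm ℚ)⁻¹ ((Aρ ^ (m+1)) (x - (m+1))) := by rw [h1]
      _ = x - (m+1) := Equiv.symm_apply_apply _ _
      _ = x + Int.negSucc m := by push_cast [Int.negSucc_eq]; ring

lemma Sρ_apply (r : ℕ) (hr : 2 ≤ r) (x : ℚ) : (Sρ r hr) x = r * x := rfl

lemma Sρ_pow (r : ℕ) (hr : 2 ≤ r) (n : ℕ) (x : ℚ) :
    ((Sρ r hr) ^ n) x = (r : ℚ) ^ n * x := by
  induction n with
  | zero => simp
  | succ m ih => rw [pow_succ', Equiv.Perm.mul_apply, ih, Sρ_apply]; ring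

lemma Sρ_inv_pow (r : ℕ) (hr : 2 ≤ r) (n : ℕ) (x : ℚ) :
    (((Sρ r hr) ^ n)⁻¹) x = ((r:ℚ) ^ n)⁻¹ * x := by
  have hrn : ((r:ℚ) ^ n) ≠ 0 := pow_ne_zero _ (hr0 r hr)
  have h1 := Sρ_pow r hr n (((r:ℚ) ^ n)⁻¹ * x)
  rw [mul_inv_cancel_left₀ hrn] at h1
  calc (((Sρ r hr) ^ n)⁻¹) x
      = (((Sρ r hr) ^ n)⁻¹) (((Sρ r hr) ^ n) (((r:ℚ) ^ n)⁻¹ * x)) := by rw [h1]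
    _ = ((r:ℚ) ^ n)⁻¹ * x := Equiv.symm_apply_apply _ _

/-- The representation of `BS r` in `Equiv.Perm ℚ`. -/
def ρ (r : ℕ) (hr : 2 ≤ r) : BS r →* Equiv.Perm ℚ :=
  PresentedGroup.toGroup (f := fun b => match b with | true => Sρ r hr | false => Aρ)
    (by
      rintro x rfl
      simp only [map_mul, map_inv, map_pow, FreeGroup.lift_apply_of]
      rw [mul_inv_eq_one]
      ext x
      rw [Equiv.Perm.mul_apply, Equiv.Perm.mul_apply, Aρ_pow]
      rw [show ((Sρ r hr)⁻¹ : Equiv.Perm ℚ) x = (r:ℚ)⁻¹ * x from by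
        simpa using Sρ_inv_pow r hr 1 x]
      rw [Aρ_apply, Sρ_apply]
      field_simp)

lemma ρ_A (r : ℕ) (hr : 2 ≤ r) : ρ r hr (A r) = Aρ := PresentedGroup.toGroup.of _
lemma ρ_S (r : ℕ) (hr : 2 ≤ r) : ρ r hr (S r) = Sρ r hr := PresentedGroup.toGroup.of _

/-- `a` has infinite order. -/
lemma apow_eq_one (r : ℕ) (hr : 2 ≤ r) (n : ℤ) (h : (A r) ^ n = 1) : n = 0 := by
  have h2 := congrArg (ρ r hr) h
  rw [map_zpow, ρ_A, map_one] at h2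
  have h3 := congrArg (fun f : Equiv.Perm ℚ => f 0) h2
  simp only [Aρ_zpow] at h3
  simpa using h3

/-- The centralizer of `s` in `BS r` consists of powers of `s`. -/
lemma bs_centralizer (r : ℕ) (hr : 2 ≤ r) (g : BS r) (h : g * S r = S r * g) :
    ∃ m : ℤ, g = (S r) ^ m := by
  obtain ⟨i, k, j, rfl⟩ := exists_nf r g
  have himg := congrArg (ρ r hr) h
  simp only [map_mul, nf, map_inv, map_pow, map_zpow, ρ_A, ρ_S] at himg
  have h0 := congrArg (fun f : Equiv.Perm ℚ => f 0) himg
  simp only [Equiv.Perm.mul_apply] at h0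
  have hval : ∀ y : ℚ, (((Sρ r hr ^ i)⁻¹) ((Aρ ^ k) (((Sρ r hr) ^ j) y)))
      = ((r:ℚ)^i)⁻¹ * ((r:ℚ)^j * y + k) := by
    intro y
    rw [Sρ_pow, Aρ_zpow, Sρ_inv_pow]
  rw [Sρ_apply, hval, hval] at h0
  rw [Sρ_apply] at h0
  simp only [mul_zero, zero_add] at h0
  have hk : k = 0 := by
    have hrn : ((r:ℚ) ^ i) ≠ 0 := pow_ne_zero _ (hr0 r hr)
    have hr1 : (2:ℚ) ≤ (r:ℚ) := by exact_mod_cast hr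
    by_contra hk0
    have hk0' : (k : ℚ) ≠ 0 := Int.cast_ne_zero.2 hk0
    have hx : ((r:ℚ)^i)⁻¹ * (k:ℚ) ≠ 0 := mul_ne_zero (inv_ne_zero hrn) hk0'
    have h1 : (1:ℚ) * (((r:ℚ)^i)⁻¹ * (k:ℚ)) = (r:ℚ) * (((r:ℚ)^i)⁻¹ * (k:ℚ)) := by
      rw [one_mul]; exact h0
    have := mul_right_cancel₀ hx h1
    linarith
  subst hk
  refine ⟨(j : ℤ) - i, ?_⟩
  simp only [nf, zpow_zero, mul_one]
  rw [zpow_sub, zpow_natCast, zpow_natCast]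
  group

/-- Homomorphism to ℤ counting the `s`-exponent. -/
def θ (r : ℕ) : BS r →* Multiplicative ℤ :=
  PresentedGroup.toGroup (f := fun b => match b with | true => Multiplicative.ofAdd (1:ℤ) | false => 1)
    (by rintro x rfl; simp)

lemma θ_A (r : ℕ) : θ r (A r) = 1 := PresentedGroup.toGroup.of _
lemma θ_S (r : ℕ) : θ r (S r) = Multiplicative.ofAdd 1 := PresentedGroup.toGroup.of _

lemma s_not_conj_apow (r : ℕ) (x : BS r) (m : ℤ) : x * S r * x⁻¹ ≠ (A r) ^ m := by
  intro h
  have h2 := congrArg (θ r) h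
  rw [map_mul, map_mul, map_inv, map_zpow, θ_A, θ_S, one_zpow, mul_comm ((θ r) x),
    mul_inv_cancel_right] at h2
  have : (1 : ℤ) = 0 := congrArg Multiplicative.toAdd h2
  exact one_ne_zero this

end Rep

section Pushout

open Monoid PushoutI

variable (r : Bool → ℕ)

/-- The maps `ℤ → BS(1, r i)` sending the generator to `a`. -/
def φ (i : Bool) : Multiplicative ℤ →* BS (r i) := zpowersHom _ (A (r i))

lemma φ_apply (i : Bool) (n : Multiplicative ℤ) :
    φ r i n = (A (r i)) ^ (Multiplicative.toAdd n) := zpowersHom_apply _ _ _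

lemma hφ (hr : ∀ i, 2 ≤ r i) : ∀ i, Function.Injective (φ r i) := by
  intro i x y hxy
  rw [φ_apply, φ_apply] at hxy
  have : (A (r i)) ^ (Multiplicative.toAdd x - Multiplicative.toAdd y) = 1 := by
    rw [zpow_sub, hxy, mul_inv_cancel]
  have := apow_eq_one (r i) (hr i) _ this
  have : Multiplicative.toAdd x = Multiplicative.toAdd y := by omega
  exact Multiplicative.toAdd.injective this

lemma mem_range_iff (i : Bool) (z : BS (r i)) :
    z ∈ (φ r i).range ↔ ∃ m : ℤ, (A (r i)) ^ m = z := by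
  constructor
  · rintro ⟨m, rfl⟩; exact ⟨Multiplicative.toAdd m, (φ_apply r i m).symm⟩
  · rintro ⟨m, rfl⟩; exact ⟨Multiplicative.ofAdd m, φ_apply r i _⟩

/-- Product of a list of letters in the pushout. -/
def PROD (L : List (Σ i, BS (r i))) : PushoutI (φ r) :=
  (L.map fun x => PushoutI.of (φ := φ r) x.1 x.2).prod

lemma PROD_nil : PROD r [] = 1 := rfl

lemma PROD_cons (x : Σ i, BS (r i)) (L : List (Σ i, BS (r i))) :
    PROD r (x :: L) = PushoutI.of (φ := φ r) x.1 x.2 * PROD r L := by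
  simp [PROD]

lemma PROD_append (L₁ L₂ : List (Σ i, BS (r i))) :
    PROD r (L₁ ++ L₂) = PROD r L₁ * PROD r L₂ := by
  simp [PROD]

/-- Inverse-reverse of a list of letters. -/
def invRev (L : List (Σ i, BS (r i))) : List (Σ i, BS (r i)) :=
  L.reverse.map fun x => ⟨x.1, x.2⁻¹⟩

lemma PROD_invRev (L : List (Σ i, BS (r i))) : PROD r (invRev r L) = (PROD r L)⁻¹ := by
  induction L with
  | nil => simp [invRev, PROD_nil]
  | cons x L ih =>
    rw [PROD_cons, mul_inv_rev]
    simp only [invRev, List.reverse_cons, List.map_append, List.map_cons, List.map_nil]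
    rw [show (L.reverse.map fun x => (⟨x.1, x.2⁻¹⟩ : Σ i, BS (r i))) = invRev r L from rfl]
    rw [PROD_append, ih, PROD_cons, PROD_nil]
    simp

lemma invRev_idx (L : List (Σ i, BS (r i))) (l : Σ i, BS (r i)) (hl : l ∈ invRev r L) :
    (⟨l.1, l.2⁻¹⟩ : Σ i, BS (r i)) ∈ L := by
  simp only [invRev, List.mem_map, List.mem_reverse] at hl
  obtain ⟨y, hy, rfl⟩ := hl
  simpa using hy

/-- Britton-style lemma: a nonempty reduced alternating word is not in the image
of the base group. -/
lemma britton (hr : ∀ i, 2 ≤ r i) (L : List (Σ i, BS (r i))) (hne : L ≠ [])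
    (hchain : L.Chain' (fun l l' => l.1 ≠ l'.1))
    (hred : ∀ l ∈ L, l.2 ∉ (φ r l.1).range)
    (h : PROD r L ∈ (PushoutI.base (φ r)).range) : False := by
  classical
  have hone : ∀ l ∈ L, l.2 ≠ 1 := by
    intro l hl h1
    exact hred l hl (h1 ▸ one_mem _)
  let w : CoprodI.Word (fun i => BS (r i)) := ⟨L, hone, hchain⟩
  have hwred : PushoutI.Reduced (φ r) w := fun g hg => hred g hg
  have hprod : PushoutI.ofCoprodI (w.prod) = PROD r L := by
    rw [CoprodI.Word.prod, map_list_prod, PROD, List.map_map]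
    congr 1
  have hemp := hwred.eq_empty_of_mem_range (hφ r hr) (by rw [hprod]; exact h)
  exact hne (congrArg CoprodI.Word.toList hemp)

lemma chain_invRev (L : List (Σ i, BS (r i)))
    (h : L.Chain' (fun l l' => l.1 ≠ l'.1)) :
    (invRev r L).Chain' (fun l l' => l.1 ≠ l'.1) := by
  rw [invRev, List.Chain', List.isChain_map, List.isChain_reverse]
  exact List.IsChain.imp (fun a b hab => by exact fun hh => hab hh.symm) h

lemma head?_invRev (L : List (Σ i, BS (r i))) :
    (invRev r L).head? = L.getLast?.map (fun x => ⟨x.1, x.2⁻¹⟩) := by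
  rw [invRev, List.head?_map, List.head?_reverse]

lemma getLast?_invRev (L : List (Σ i, BS (r i))) :
    (invRev r L).getLast? = L.head?.map (fun x => ⟨x.1, x.2⁻¹⟩) := by
  rw [invRev, List.getLast?_map, List.getLast?_reverse]

/-- Key conjugacy lemma: if a reduced alternating word conjugates `of i u` into
`of i`'s image, where `u` is not conjugate into the amalgamated subgroup, then all
letters of the word are in the `i` factor. -/
lemma conj_lemma (hr : ∀ i, 2 ≤ r i) (i : Bool) :
    ∀ (n : ℕ) (L : List (Σ j, BS (r j))), L.length = n →
    L.Chain' (fun l l' => l.1 ≠ l'.1) →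
    (∀ l ∈ L, l.2 ∉ (φ r l.1).range) →
    ∀ (u v : BS (r i)), (∀ x : BS (r i), x * u * x⁻¹ ∉ (φ r i).range) →
    PROD r L * PushoutI.of (φ := φ r) i u * (PROD r L)⁻¹ = PushoutI.of (φ := φ r) i v →
    ∀ l ∈ L, l.1 = i := by
  intro n
  induction n with
  | zero =>
    intro L hlen _ _ _ _ _ _ l hl
    rw [List.length_eq_zero_iff] at hlen
    subst hlen
    simp at hl
  | succ n ih =>
    intro L hlen hchain hred u v hu heq
    obtain ⟨x, L', rfl⟩ : ∃ x L', L = x :: L' := by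
      cases L with
      | nil => simp at hlen
      | cons a b => exact ⟨a, b, rfl⟩
    by_cases hx : x.1 = i
    · -- peel off the first letter
      obtain ⟨xi, xg⟩ := x
      dsimp at hx
      subst hx
      rw [PROD_cons] at heq
      have heq' : PROD r L' * PushoutI.of (φ := φ r) xi u * (PROD r L')⁻¹ =
          PushoutI.of (φ := φ r) xi (xg⁻¹ * v * xg) := by
        rw [map_mul, map_mul, map_inv]
        rw [← heq]
        group
      have hall := ih L' (by simpa using hlen) hchain.tail
        (fun l hl => hred l (List.mem_cons_of_mem _ hl)) u (xg⁻¹ * v * xg) hu heq'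
      intro l hl
      rcases List.mem_cons.1 hl with rfl | hl'
      · rfl
      · exact hall l hl'
    · -- first letter is not in factor i
      exfalso
      obtain ⟨L₀, hL₀⟩ : ∃ L₀, L₀ = x :: L' := ⟨_, rfl⟩
      rw [← hL₀] at hlen hchain hred heq
      have hL₀ne : L₀ ≠ [] := by rw [hL₀]; simp
      have hheadL₀ : L₀.head? = some x := by rw [hL₀]; rfl
      by_cases hz : (L₀.getLast hL₀ne).1 = i
      · -- peel off the last letter; contradiction since the first letter survives
        obtain ⟨F, z, hFz, hz2⟩ : ∃ F z, L₀ = F ++ [z] ∧ z.1 = i :=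
          ⟨L₀.dropLast, L₀.getLast hL₀ne, (List.dropLast_append_getLast hL₀ne).symm, hz⟩
        obtain ⟨zi, zg⟩ := z
        dsimp at hz2
        subst hz2
        rw [hFz, PROD_append, PROD_cons, PROD_nil, mul_one] at heq
        have heq' : PROD r F * PushoutI.of (φ := φ r) zi (zg * u * zg⁻¹) * (PROD r F)⁻¹ =
            PushoutI.of (φ := φ r) zi v := by
          rw [map_mul, map_mul, map_inv, ← heq]
          group
        have hu' : ∀ y : BS (r zi), y * (zg * u * zg⁻¹) * y⁻¹ ∉ (φ r zi).range := by
          intro y hy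
          have hrw : (y * zg) * u * (y * zg)⁻¹ = y * (zg * u * zg⁻¹) * y⁻¹ := by group
          exact hu (y * zg) (by rw [hrw]; exact hy)
        have hlenF : F.length = n := by
          have h1 : L₀.length = F.length + 1 := by rw [hFz]; simp
          omega
        have hallF := ih F hlenF
          (by rw [hFz] at hchain; exact (List.isChain_append.1 (by exact hchain)).1)
          (fun l hl => hred l (by rw [hFz]; exact List.mem_append_left _ hl))
          (zg * u * zg⁻¹) v hu' heq'
        cases F with
        | nil =>
          rw [hL₀] at hFz
          simp only [List.nil_append, List.cons.injEq] at hFz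
          exact hx (by rw [hFz.1])
        | cons f F'' =>
          have hxf : x = f := by
            have h2 := hheadL₀
            rw [hFz] at h2
            simp only [List.cons_append, List.head?_cons, Option.some.injEq] at h2
            exact h2.symm
          exact hx (by rw [hxf]; exact hallF f (List.mem_cons_self))
      · -- both ends avoid factor i: Britton's lemma gives a contradiction
        have hune : u ∉ (φ r i).range := by
          have := hu 1
          simpa using this
        obtain ⟨M₀, hM₀⟩ : ∃ M₀, M₀ = L₀ ++ ⟨i, u⟩ :: invRev r L₀ := ⟨_, rfl⟩
        have hM₀prod : PROD r M₀ = PushoutI.of (φ := φ r) i v := by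
          rw [hM₀, PROD_append, PROD_cons, PROD_invRev, ← mul_assoc, ← heq]
        have hM₀chain : M₀.Chain' (fun l l' => l.1 ≠ l'.1) := by
          rw [hM₀, List.Chain', List.isChain_append]
          refine ⟨hchain, ?_, ?_⟩
          · rw [List.isChain_cons]
            refine ⟨?_, chain_invRev r _ hchain⟩
            intro y hy
            rw [head?_invRev, List.getLast?_eq_getLast hL₀ne] at hy
            simp only [Option.map_some, Option.mem_def, Option.some.injEq] at hy
            subst hy
            exact fun hh => hz hh.symm
          · intro a ha b hb
            rw [List.getLast?_eq_getLast hL₀ne] at ha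
            simp only [Option.mem_def, Option.some.injEq] at ha
            subst ha
            have hb' : b = ⟨i, u⟩ := by
              rw [Option.mem_def, List.head?_cons, Option.some_inj] at hb
              exact hb.symm
            subst hb'
            exact hz
        have hM₀red : ∀ l ∈ M₀, l.2 ∉ (φ r l.1).range := by
          intro l hl
          rw [hM₀] at hl
          rcases List.mem_append.1 hl with hl | hl
          · exact hred l hl
          · rcases List.mem_cons.1 hl with rfl | hl
            · exact hune
            · have hmem := invRev_idx r L₀ l hl
              have h3 := hred _ hmem
              intro hcon
              exact h3 (by simpa using Subgroup.inv_mem _ hcon)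
        have hM₀ne : M₀ ≠ [] := by rw [hM₀, hL₀]; simp
        by_cases hv : v ∈ (φ r i).range
        · obtain ⟨m, hm⟩ := hv
          refine britton r hr M₀ hM₀ne hM₀chain hM₀red ?_
          rw [hM₀prod, ← hm, PushoutI.of_apply_eq_base]
          exact ⟨m, rfl⟩
        · obtain ⟨M, hM⟩ : ∃ M, M = M₀ ++ [(⟨i, v⁻¹⟩ : Σ j, BS (r j))] := ⟨_, rfl⟩
          have hMprod : PROD r M = 1 := by
            rw [hM, PROD_append, hM₀prod, PROD_cons, PROD_nil, mul_one, ← map_mul]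
            simp
          have hinvne : invRev r L₀ ≠ [] := by
            rw [hL₀]
            simp [invRev]
          have hlastM₀ : M₀.getLast? = some ⟨x.1, x.2⁻¹⟩ := by
            rw [hM₀, List.getLast?_append,
              show (⟨i, u⟩ :: invRev r L₀ : List (Σ j, BS (r j)))
                = [⟨i, u⟩] ++ invRev r L₀ from rfl,
              List.getLast?_append, getLast?_invRev, hheadL₀]
            rfl
          have hMchain : M.Chain' (fun l l' => l.1 ≠ l'.1) := by
            rw [hM, List.Chain', List.isChain_append]
            refine ⟨hM₀chain, List.isChain_singleton _, ?_⟩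
            intro a ha b hb
            rw [Option.mem_def, hlastM₀, Option.some_inj] at ha
            subst ha
            have hb' : b = ⟨i, v⁻¹⟩ := by
              rw [Option.mem_def, List.head?_cons, Option.some_inj] at hb
              exact hb.symm
            subst hb'
            exact hx
          have hMred : ∀ l ∈ M, l.2 ∉ (φ r l.1).range := by
            intro l hl
            rw [hM] at hl
            rcases List.mem_append.1 hl with hl | hl
            · exact hM₀red l hl
            · rcases List.mem_singleton.1 hl with rfl
              intro hcon
              exact hv (by simpa using Subgroup.inv_mem _ hcon)
          refine britton r hr M (by rw [hM]; simp [hM₀ne]) hMchain hMred ?_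
          rw [hMprod]
          exact ⟨1, by simp⟩

/-- Every element of `BS (r i)` that lies in the transversal and is nontrivial is
not in the range of the base map. -/
lemma transversal_not_in_range (hr : ∀ i, 2 ≤ r i) (d : PushoutI.NormalWord.Transversal (φ r))
    (j : Bool) (y : BS (r j)) (hy : y ∈ d.set j) (hy1 : y ≠ 1) : y ∉ (φ r j).range := by
  intro hcon
  apply hy1
  have hinj := (d.compl j).injective
  have := hinj (a₁ := (⟨⟨y, hcon⟩, ⟨1, d.one_mem j⟩⟩ : (φ r j).range × d.set j))
    (a₂ := (⟨⟨1, one_mem _⟩, ⟨y, hy⟩⟩ : (φ r j).range × d.set j)) (by simp)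
  have h2 := congrArg (fun z => (z.2 : BS (r j))) this
  simpa using h2.symm

/-- Conversion between products of words. -/
lemma ofCoprodI_word_prod (w : CoprodI.Word (fun i => BS (r i))) :
    PushoutI.ofCoprodI (φ := φ r) w.prod = PROD r w.toList := by
  rw [CoprodI.Word.prod, map_list_prod, PROD, List.map_map]
  congr 1

/-- The centralizer of `of i s` in the pushout consists of powers of `of i s`. -/
lemma pushout_centralizer (hr : ∀ i, 2 ≤ r i) (i : Bool) (g : PushoutI (φ r))
    (hg : g * PushoutI.of (φ := φ r) i (S (r i)) = PushoutI.of (φ := φ r) i (S (r i)) * g) :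
    ∃ m : ℤ, g = (PushoutI.of (φ := φ r) i (S (r i))) ^ m := by
  classical
  obtain ⟨d⟩ := PushoutI.NormalWord.transversal_nonempty (φ r) (hφ r hr)
  set w : PushoutI.NormalWord d := g • PushoutI.NormalWord.empty with hw
  have hgw : w.prod = g := by
    rw [hw, PushoutI.NormalWord.prod_smul, PushoutI.NormalWord.prod_empty, mul_one]
  have hdecomp : g = PushoutI.base (φ r) w.head * PROD r w.toList := by
    rw [← hgw, PushoutI.NormalWord.prod, ofCoprodI_word_prod]
  have hred : ∀ l ∈ w.toList, l.2 ∉ (φ r l.1).range := by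
    intro l hl
    exact transversal_not_in_range r hr d l.1 l.2 (w.normalized l.1 l.2 hl)
      (w.toWord.ne_one l hl)
  have hchain : w.toList.Chain' (fun l l' => l.1 ≠ l'.1) := w.toWord.chain_ne
  -- rewrite the commutation equation
  set h' : ℤ := Multiplicative.toAdd w.head with hh'
  have hbase : PushoutI.base (φ r) w.head = PushoutI.of (φ := φ r) i ((A (r i)) ^ h') := by
    rw [← PushoutI.of_apply_eq_base (φ := φ r) i w.head, φ_apply]
  have heq : PROD r w.toList * PushoutI.of (φ := φ r) i (S (r i)) * (PROD r w.toList)⁻¹ =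
      PushoutI.of (φ := φ r) i (((A (r i)) ^ h')⁻¹ * S (r i) * (A (r i)) ^ h') := by
    rw [map_mul, map_mul, map_inv]
    have hg' := hg
    rw [hdecomp, hbase] at hg'
    calc PROD r w.toList * PushoutI.of (φ := φ r) i (S (r i)) * (PROD r w.toList)⁻¹
        = (PushoutI.of (φ := φ r) i ((A (r i)) ^ h'))⁻¹ *
          ((PushoutI.of (φ := φ r) i ((A (r i)) ^ h') * PROD r w.toList) *
            PushoutI.of (φ := φ r) i (S (r i))) * (PROD r w.toList)⁻¹ := by group
      _ = _ := by rw [hg']; group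
  have hu : ∀ x : BS (r i), x * S (r i) * x⁻¹ ∉ (φ r i).range := by
    intro x hx
    rw [mem_range_iff] at hx
    obtain ⟨m, hm⟩ := hx
    exact s_not_conj_apow (r i) x m hm.symm
  have hall := conj_lemma r hr i w.toList.length w.toList rfl hchain hred
    (S (r i)) _ hu heq
  -- the word has length at most one
  have hshort : PROD r w.toList = 1 ∨ ∃ y : BS (r i), PROD r w.toList =
      PushoutI.of (φ := φ r) i y := by
    cases hLc : w.toList with
    | nil => left; rw [hLc] at *; rfl
    | cons l L'' =>
      cases hL''c : L'' with
      | nil =>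
        right
        obtain ⟨li, lg⟩ := l
        have hli : li = i := hall ⟨li, lg⟩ (by rw [hLc]; exact List.mem_cons_self)
        subst hli
        refine ⟨lg, ?_⟩
        simp only [hLc, hL''c, PROD_cons, PROD_nil, mul_one]
      | cons l2 L3 =>
        exfalso
        have h1 : l.1 = i := hall l (by rw [hLc]; exact List.mem_cons_self)
        have h2 : l2.1 = i := hall l2 (by rw [hLc, hL''c]; simp)
        have := hchain
        rw [hLc, hL''c, List.Chain', List.isChain_cons_cons] at this
        exact this.1 (by rw [h1, h2])
  -- conclude
  have hrange : ∃ y : BS (r i), g = PushoutI.of (φ := φ r) i y := by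
    rcases hshort with h1 | ⟨y, h1⟩
    · exact ⟨(A (r i)) ^ h', by rw [hdecomp, h1, mul_one, hbase]⟩
    · exact ⟨(A (r i)) ^ h' * y, by rw [hdecomp, h1, hbase, map_mul]⟩
  obtain ⟨y, rfl⟩ := hrange
  rw [← map_mul, ← map_mul] at hg
  have hcomm := PushoutI.of_injective (hφ r hr) i hg
  obtain ⟨m, hm⟩ := bs_centralizer (r i) (hr i) y hcomm
  exact ⟨m, by rw [hm, map_zpow]⟩

end Pushout

section Assembly

open Monoid PushoutI

variable (p q : ℕ) (hp : 2 ≤ p) (hq : 2 ≤ q)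

/-- The pair of exponents. -/
def rr (p q : ℕ) : Bool → ℕ := fun i => cond i q p

lemma hrr (hp : 2 ≤ p) (hq : 2 ≤ q) : ∀ i, 2 ≤ rr p q i := by
  intro i; cases i
  · exact hp
  · exact hq

lemma bs_rel_one (r : ℕ) : S r * A r * (S r)⁻¹ * ((A r) ^ r)⁻¹ = 1 := by
  rw [bs_rel]; simp

/-- The images of the three generators in the pushout. -/
def genImg (p q : ℕ) : Gen → PushoutI (φ (rr p q)) := fun x =>
  match x with
  | Gen.a => PushoutI.of (φ := φ (rr p q)) false (A p)
  | Gen.s => PushoutI.of (φ := φ (rr p q)) false (S p)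
  | Gen.t => PushoutI.of (φ := φ (rr p q)) true (S q)

lemma of_A_eq_base (i : Bool) :
    PushoutI.of (φ := φ (rr p q)) i (A (rr p q i)) =
      PushoutI.base (φ (rr p q)) (Multiplicative.ofAdd 1) := by
  rw [← PushoutI.of_apply_eq_base (φ := φ (rr p q)) i]
  have h : φ (rr p q) i (Multiplicative.ofAdd 1) = A (rr p q i) := by
    rw [φ_apply]; simp
  rw [h]

/-- The forward homomorphism from the presented group to the pushout. -/
def Fhom : PresentedGroup (gbsRels p q) →* PushoutI (φ (rr p q)) :=
  PresentedGroup.toGroup (f := genImg p q)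
    (by
      intro x hx
      rcases hx with rfl | rfl
      · simp only [map_mul, map_inv, map_pow, FreeGroup.lift_apply_of, genImg]
        have h := congrArg (PushoutI.of (φ := φ (rr p q)) false) (bs_rel_one (rr p q false))
        simp only [map_mul, map_inv, map_pow, map_one] at h
        exact h
      · simp only [map_mul, map_inv, map_pow, FreeGroup.lift_apply_of, genImg]
        rw [show PushoutI.of (φ := φ (rr p q)) false (A p) =
          PushoutI.of (φ := φ (rr p q)) true (A q) from
            (of_A_eq_base p q false).trans (of_A_eq_base p q true).symm]
        have h := congrArg (PushoutI.of (φ := φ (rr p q)) true) (bs_rel_one (rr p q true))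
        simp only [map_mul, map_inv, map_pow, map_one] at h
        exact h)

lemma Fhom_a : Fhom p q (PresentedGroup.of Gen.a) = PushoutI.of (φ := φ (rr p q)) false (A p) :=
  PresentedGroup.toGroup.of _
lemma Fhom_s : Fhom p q (PresentedGroup.of Gen.s) = PushoutI.of (φ := φ (rr p q)) false (S p) :=
  PresentedGroup.toGroup.of _
lemma Fhom_t : Fhom p q (PresentedGroup.of Gen.t) = PushoutI.of (φ := φ (rr p q)) true (S q) :=
  PresentedGroup.toGroup.of _

lemma pg_rel_one_s : (PresentedGroup.of Gen.s : PresentedGroup (gbsRels p q)) *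
    PresentedGroup.of Gen.a * (PresentedGroup.of Gen.s)⁻¹ *
    ((PresentedGroup.of Gen.a : PresentedGroup (gbsRels p q)) ^ p)⁻¹ = 1 := by
  have h : (PresentedGroup.mk (gbsRels p q))
      (FreeGroup.of Gen.s * FreeGroup.of Gen.a * (FreeGroup.of Gen.s)⁻¹ *
        ((FreeGroup.of Gen.a) ^ p)⁻¹) = 1 := by
    apply (QuotientGroup.eq_one_iff _).2
    exact Subgroup.subset_normalClosure (Or.inl rfl)
  simp only [map_mul, map_inv, map_pow] at h
  exact h

lemma pg_rel_one_t : (PresentedGroup.of Gen.t : PresentedGroup (gbsRels p q)) *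
    PresentedGroup.of Gen.a * (PresentedGroup.of Gen.t)⁻¹ *
    ((PresentedGroup.of Gen.a : PresentedGroup (gbsRels p q)) ^ q)⁻¹ = 1 := by
  have h : (PresentedGroup.mk (gbsRels p q))
      (FreeGroup.of Gen.t * FreeGroup.of Gen.a * (FreeGroup.of Gen.t)⁻¹ *
        ((FreeGroup.of Gen.a) ^ q)⁻¹) = 1 := by
    apply (QuotientGroup.eq_one_iff _).2
    exact Subgroup.subset_normalClosure (Or.inr rfl)
  simp only [map_mul, map_inv, map_pow] at h
  exact h

/-- The factor maps back to the presented group. -/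
def ψ (i : Bool) : BS (rr p q i) →* PresentedGroup (gbsRels p q) :=
  PresentedGroup.toGroup
    (f := fun b => match b with
      | false => PresentedGroup.of Gen.a
      | true => PresentedGroup.of (cond i Gen.t Gen.s))
    (by
      intro x hx
      rcases hx with rfl
      simp only [map_mul, map_inv, map_pow, FreeGroup.lift_apply_of]
      cases i
      · exact pg_rel_one_s p q
      · exact pg_rel_one_t p q)

lemma ψ_A (i : Bool) : ψ p q i (A (rr p q i)) = PresentedGroup.of Gen.a :=
  PresentedGroup.toGroup.of _
lemma ψ_S (i : Bool) : ψ p q i (S (rr p q i)) = PresentedGroup.of (cond i Gen.t Gen.s) :=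
  PresentedGroup.toGroup.of _

/-- The backward homomorphism from the pushout to the presented group. -/
def Bhom : PushoutI (φ (rr p q)) →* PresentedGroup (gbsRels p q) :=
  PushoutI.lift (ψ p q) (zpowersHom _ (PresentedGroup.of Gen.a))
    (by
      intro i
      apply MonoidHom.ext_mint
      rw [MonoidHom.comp_apply, zpowersHom_apply]
      have : φ (rr p q) i (Multiplicative.ofAdd 1) = A (rr p q i) := by
        rw [φ_apply]; simp
      rw [this, ψ_A]
      simp)

lemma Bhom_comp_Fhom :
    (Bhom p q).comp (Fhom p q) = MonoidHom.id (PresentedGroup (gbsRels p q)) := by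
  apply PresentedGroup.ext
  intro x
  cases x
  · rw [MonoidHom.comp_apply, Fhom_a, Bhom]
    erw [PushoutI.lift_of]
  · rw [MonoidHom.comp_apply, Fhom_s, Bhom]
    erw [PushoutI.lift_of]
  · rw [MonoidHom.comp_apply, Fhom_t, Bhom]
    erw [PushoutI.lift_of]

lemma BF_id (x : PresentedGroup (gbsRels p q)) : Bhom p q (Fhom p q x) = x := by
  have := congrArg (fun f => f x) (Bhom_comp_Fhom p q)
  simpa using this

end Assembly

end GBS

namespace GBS

section Final

open Monoid PushoutI

lemma centralizer_eq (p q : ℕ) (hp : 2 ≤ p) (hq : 2 ≤ q) (g0 : Gen) (i : Bool)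
    (hg0 : Fhom p q (PresentedGroup.of g0) =
      PushoutI.of (φ := φ (rr p q)) i (S (rr p q i))) :
    Subgroup.centralizer {(PresentedGroup.of g0 : PresentedGroup (gbsRels p q))} =
      Subgroup.zpowers (PresentedGroup.of g0 : PresentedGroup (gbsRels p q)) := by
  ext x
  constructor
  · intro hx
    have hcomm := Subgroup.mem_centralizer_iff.1 hx _ (Set.mem_singleton _)
    have himg : Fhom p q x * PushoutI.of (φ := φ (rr p q)) i (S (rr p q i)) =
        PushoutI.of (φ := φ (rr p q)) i (S (rr p q i)) * Fhom p q x := by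
      rw [← hg0, ← map_mul, ← map_mul]
      exact congrArg (Fhom p q) hcomm.symm
    obtain ⟨m, hm⟩ := pushout_centralizer (rr p q) (hrr p q hp hq) i (Fhom p q x) himg
    have hx' : x = (PresentedGroup.of g0 : PresentedGroup (gbsRels p q)) ^ m := by
      have h2 : Fhom p q x = Fhom p q ((PresentedGroup.of g0) ^ m) := by
        rw [hm, map_zpow, hg0]
      have h3 := congrArg (Bhom p q) h2
      rwa [BF_id, BF_id] at h3
    rw [hx']
    exact Subgroup.zpow_mem _ (Subgroup.mem_zpowers _) m
  · intro hx
    obtain ⟨m, hm⟩ := Subgroup.mem_zpowers_iff.1 hx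
    rw [Subgroup.mem_centralizer_iff]
    intro h hh
    rw [Set.mem_singleton_iff] at hh
    subst hh
    rw [← hm]
    exact ((Commute.refl _).zpow_right m).eq

end Final

end GBS

theorem centralizer_s_and_t (p q : ℕ) (hp : p.Prime) (hq : q.Prime) (hpq : p ≠ q) :
    Subgroup.centralizer {(PresentedGroup.of Gen.s : PresentedGroup (gbsRels p q))} =
      Subgroup.zpowers (PresentedGroup.of Gen.s : PresentedGroup (gbsRels p q)) ∧
    Subgroup.centralizer {(PresentedGroup.of Gen.t : PresentedGroup (gbsRels p q))} =
      Subgroup.zpowers (PresentedGroup.of Gen.t : PresentedGroup (gbsRels p q)) := by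
  constructor
  · exact GBS.centralizer_eq p q hp.two_le hq.two_le Gen.s false (GBS.Fhom_s p q)
  · exact GBS.centralizer_eq p q hp.two_le hq.two_le Gen.t true (GBS.Fhom_t p q)
end

section
/- Let A(P₃) = ⟨a, b, c | ab = ba, bc = cb⟩. Then the intersection of the three subgroups ⟨ab, c⟩, ⟨a, bc⟩ and ⟨a, c⟩ equals the commutator subgroup [⟨a, c⟩, ⟨a, c⟩] of the subgroup ⟨a, c⟩: ⟨ab, c⟩ ∩ ⟨a, bc⟩ ∩ ⟨a, c⟩ = [⟨a, c⟩, ⟨a, c⟩]. -/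
/-- Generators of `A(P₃) = ⟨a, b, c | ab = ba, bc = cb⟩`. -/
inductive GenA
  | a | b | c

open scoped commutatorElement in
/-- Relators of `A(P₃) = ⟨a, b, c | ab = ba, bc = cb⟩`. -/
def relsA : Set (FreeGroup GenA) :=
  { ⁅FreeGroup.of GenA.a, FreeGroup.of GenA.b⁆,
    ⁅FreeGroup.of GenA.b, FreeGroup.of GenA.c⁆ }

open Subgroup

open scoped commutatorElement

section Aux

/-- Commutator is unchanged by multiplying the left entry by a central element. -/
theorem AP3.comm_central_left {G : Type*} [Group G] {z : G} (hz : ∀ g, z * g = g * z)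
    (p x : G) : ⁅p * z, x⁆ = ⁅p, x⁆ := by
  simp only [commutatorElement_def]
  have h1 : p * z * x * (p * z)⁻¹ * x⁻¹ = p * (z * x) * z⁻¹ * p⁻¹ * x⁻¹ := by group
  rw [h1, hz x]; group

/-- Commutator is unchanged by multiplying the right entry by a central element. -/
theorem AP3.comm_central_right {G : Type*} [Group G] {w : G} (hw : ∀ g, w * g = g * w)
    (x q : G) : ⁅x, q * w⁆ = ⁅x, q⁆ := by
  simp only [commutatorElement_def]
  have h1 : x * (q * w) * x⁻¹ * (q * w)⁻¹ = x * q * (w * x⁻¹) * w⁻¹ * q⁻¹ := by group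
  rw [h1, hw x⁻¹]; group

/-- If `h` lies in the subgroup generated by `x` and `y`, and two homomorphisms to `ℤ`
"dual" to `x` and `y` both kill `h`, then `h` lies in the commutator subgroup. -/
theorem AP3.mem_commutator_of_maps {G : Type*} [Group G] (x y : G)
    (f g : G →* Multiplicative ℤ)
    (hfx : f x = Multiplicative.ofAdd 1) (hfy : f y = 1)
    (hgx : g x = 1) (hgy : g y = Multiplicative.ofAdd 1)
    {h : G} (hh : h ∈ Subgroup.closure {x, y}) (hf : f h = 1) (hg : g h = 1) :
    h ∈ ⁅Subgroup.closure {x, y}, Subgroup.closure ({x, y} : Set G)⁆ := by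
  set H := Subgroup.closure ({x, y} : Set G) with hHdef
  have hx : x ∈ H := subset_closure (by simp)
  have hy : y ∈ H := subset_closure (by simp)
  set x' : H := ⟨x, hx⟩
  set y' : H := ⟨y, hy⟩
  have hpre : (H.subtype ⁻¹' ({x, y} : Set G)) = {x', y'} := by
    ext z
    simp only [Set.mem_preimage, Set.mem_insert_iff, Set.mem_singleton_iff, Subgroup.coe_subtype]
    constructor
    · rintro (h1 | h1)
      · exact Or.inl (Subtype.ext h1)
      · exact Or.inr (Subtype.ext h1)
    · rintro (rfl | rfl) <;> simp [x', y']
  have htop : Subgroup.closure ({x', y'} : Set H) = ⊤ := by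
    rw [← hpre]; exact Subgroup.closure_preimage_eq_top _
  have key : ∀ z : H, ∃ m n : ℤ,
      Abelianization.of z = Abelianization.of x' ^ m * Abelianization.of y' ^ n := by
    intro z
    have hz : z ∈ Subgroup.closure ({x', y'} : Set H) := htop ▸ Subgroup.mem_top z
    induction hz using Subgroup.closure_induction with
    | mem w hw =>
      rcases hw with h1 | h1
      · exact ⟨1, 0, by rw [h1]; simp⟩
      · exact ⟨0, 1, by rw [h1]; simp⟩
    | one => exact ⟨0, 0, by simp⟩
    | mul a b _ _ iha ihb =>
      obtain ⟨m, n, hm⟩ := iha; obtain ⟨p, q, hp⟩ := ihb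
      refine ⟨m + p, n + q, ?_⟩
      rw [map_mul, hm, hp, zpow_add, zpow_add]
      exact mul_mul_mul_comm _ _ _ _
    | inv a _ ih =>
      obtain ⟨m, n, hm⟩ := ih
      exact ⟨-m, -n, by rw [map_inv, hm, mul_inv, ← zpow_neg, ← zpow_neg, mul_comm]⟩
  obtain ⟨m, n, hmn⟩ := key ⟨h, hh⟩
  set z : ↥H := ⟨h, hh⟩ * (x' ^ m * y' ^ n)⁻¹ with hzdef
  have hz1 : Abelianization.of z = 1 := by
    rw [hzdef, map_mul, map_inv, map_mul, map_zpow, map_zpow, ← hmn, mul_inv_cancel]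
  have hzcomm : z ∈ commutator ↥H := by
    rwa [← QuotientGroup.eq_one_iff z]
  have hmap : Subgroup.map H.subtype (commutator ↥H) = ⁅H, H⁆ := by
    rw [_root_.commutator_def, Subgroup.map_commutator]
    congr 1 <;> rw [← MonoidHom.range_eq_map, Subgroup.range_subtype]
  have hzmem : (z : G) ∈ ⁅H, H⁆ := by
    rw [← hmap]; exact ⟨z, hzcomm, rfl⟩
  have hzval : (z : G) = h * (x ^ m * y ^ n)⁻¹ := by
    push_cast [hzdef]; rfl
  have hker : ∀ (φ : G →* Multiplicative ℤ) (u : G), u ∈ ⁅H, H⁆ → φ u = 1 := by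
    intro φ u hu
    have hle : ⁅H, H⁆ ≤ φ.ker := Subgroup.commutator_le.mpr fun p _ q _ => by
      rw [MonoidHom.mem_ker, map_commutatorElement]
      exact commutatorElement_eq_one_iff_commute.mpr (Commute.all _ _)
    exact hle hu
  have hfz := hker f _ hzmem
  have hgz := hker g _ hzmem
  rw [hzval, map_mul, map_inv, map_mul, map_zpow, map_zpow, hf, hfx, hfy, one_zpow,
    mul_one, one_mul] at hfz
  rw [hzval, map_mul, map_inv, map_mul, map_zpow, map_zpow, hg, hgx, hgy, one_zpow,
    one_mul, one_mul] at hgz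
  have hm0 : m = 0 := by
    have := congrArg Multiplicative.toAdd hfz
    simpa using this
  have hn0 : n = 0 := by
    have := congrArg Multiplicative.toAdd hgz
    simpa using this
  have hzh : (z : G) = h := by
    rw [hzval, hm0, hn0]; simp
  rwa [← hzh]

namespace AP3

abbrev A := PresentedGroup relsA

abbrev ga : A := PresentedGroup.of GenA.a
abbrev gb : A := PresentedGroup.of GenA.b
abbrev gc : A := PresentedGroup.of GenA.c

theorem rel_one {r : FreeGroup GenA} (hr : r ∈ relsA) : PresentedGroup.mk relsA r = 1 :=
  (QuotientGroup.eq_one_iff _).mpr (Subgroup.subset_normalClosure hr)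

theorem hab : Commute ga gb := by
  rw [← commutatorElement_eq_one_iff_commute]
  have h : (⁅ga, gb⁆ : A)
      = PresentedGroup.mk relsA ⁅FreeGroup.of GenA.a, FreeGroup.of GenA.b⁆ :=
    (map_commutatorElement (PresentedGroup.mk relsA) _ _).symm
  rw [h]
  exact rel_one (by left; rfl)

theorem hbc : Commute gb gc := by
  rw [← commutatorElement_eq_one_iff_commute]
  have h : (⁅gb, gc⁆ : A)
      = PresentedGroup.mk relsA ⁅FreeGroup.of GenA.b, FreeGroup.of GenA.c⁆ :=
    (map_commutatorElement (PresentedGroup.mk relsA) _ _).symm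
  rw [h]
  exact rel_one (by right; rfl)

/-- `b` is central in `A(P₃)`. -/
theorem b_central : ∀ g : A, gb * g = g * gb := by
  intro g
  have : g ∈ Subgroup.centralizer ({gb} : Set A) := by
    refine PresentedGroup.generated_by relsA _ (fun j => ?_) g
    rw [Subgroup.mem_centralizer_iff]
    rintro h rfl
    cases j with
    | a => exact hab.symm.eq
    | b => rfl
    | c => exact hbc.eq
  exact Subgroup.mem_centralizer_iff.mp this gb rfl

theorem b_zpow_central (k : ℤ) : ∀ g : A, gb ^ k * g = g * gb ^ k := fun g =>
  (Commute.zpow_left (show Commute gb g from b_central g) k).eq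

/-- Any map of the generators into a commutative group kills the relators. -/
theorem lift_rels_comm {M : Type*} [CommGroup M] (v : GenA → M) :
    ∀ r ∈ relsA, FreeGroup.lift v r = 1 := by
  intro r hr
  rcases hr with rfl | rfl <;>
    · rw [map_commutatorElement]
      exact commutatorElement_eq_one_iff_commute.mpr (Commute.all _ _)

/-- Exponent-sum homomorphisms. -/
def expHom (v : GenA → Multiplicative ℤ) : A →* Multiplicative ℤ :=
  PresentedGroup.toGroup (lift_rels_comm v)

@[simp] theorem expHom_of (v : GenA → Multiplicative ℤ) (x : GenA) :
    expHom v (PresentedGroup.of x) = v x :=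
  PresentedGroup.toGroup.of _

def vA : GenA → Multiplicative ℤ
  | .a => Multiplicative.ofAdd 1 | .b => 1 | .c => 1
def vB : GenA → Multiplicative ℤ
  | .a => 1 | .b => Multiplicative.ofAdd 1 | .c => 1
def vC : GenA → Multiplicative ℤ
  | .a => 1 | .b => 1 | .c => Multiplicative.ofAdd 1
def vAB : GenA → Multiplicative ℤ
  | .a => Multiplicative.ofAdd 1 | .b => Multiplicative.ofAdd (-1) | .c => 1
def vBC : GenA → Multiplicative ℤ
  | .a => 1 | .b => Multiplicative.ofAdd 1 | .c => Multiplicative.ofAdd (-1)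

/-- The endomorphism `a ↦ ab, b ↦ b, c ↦ c`. -/
def psi1 : A →* A :=
  PresentedGroup.toGroup (f := fun x => match x with
    | GenA.a => ga * gb | GenA.b => gb | GenA.c => gc) (by
      intro r hr
      rcases hr with rfl | rfl <;> rw [map_commutatorElement] <;>
        refine commutatorElement_eq_one_iff_commute.mpr ?_
      · simpa [FreeGroup.lift_apply_of] using hab.mul_left (Commute.refl gb)
      · simpa [FreeGroup.lift_apply_of] using hbc)

/-- The endomorphism `a ↦ a, b ↦ b, c ↦ bc`. -/
def psi2 : A →* A :=
  PresentedGroup.toGroup (f := fun x => match x with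
    | GenA.a => ga | GenA.b => gb | GenA.c => gb * gc) (by
      intro r hr
      rcases hr with rfl | rfl <;> rw [map_commutatorElement] <;>
        refine commutatorElement_eq_one_iff_commute.mpr ?_
      · simpa [FreeGroup.lift_apply_of] using hab
      · simpa [FreeGroup.lift_apply_of] using (Commute.refl gb).mul_right hbc)

@[simp] theorem psi1_a : psi1 ga = ga * gb := PresentedGroup.toGroup.of _
@[simp] theorem psi1_b : psi1 gb = gb := PresentedGroup.toGroup.of _
@[simp] theorem psi1_c : psi1 gc = gc := PresentedGroup.toGroup.of _
@[simp] theorem psi2_a : psi2 ga = ga := PresentedGroup.toGroup.of _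
@[simp] theorem psi2_b : psi2 gb = gb := PresentedGroup.toGroup.of _
@[simp] theorem psi2_c : psi2 gc = gb * gc := PresentedGroup.toGroup.of _

/-- On the subgroup `⟨a, c⟩`, `psi1` is multiplication by a power of the central element `b`. -/
theorem psi1_eq (g : A) (hg : g ∈ Subgroup.closure ({ga, gc} : Set A)) :
    ∃ k : ℤ, psi1 g = g * gb ^ k := by
  induction hg using Subgroup.closure_induction with
  | mem w hw =>
    rcases hw with rfl | rfl
    · exact ⟨1, by simp⟩
    · exact ⟨0, by simp⟩
  | one => exact ⟨0, by simp⟩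
  | mul u v _ _ ihu ihv =>
    obtain ⟨k, hk⟩ := ihu; obtain ⟨l, hl⟩ := ihv
    refine ⟨k + l, ?_⟩
    rw [map_mul, hk, hl]
    have h1 : u * gb ^ k * (v * gb ^ l) = u * (gb ^ k * v) * gb ^ l := by group
    rw [h1, b_zpow_central k v]
    group
  | inv u _ ih =>
    obtain ⟨k, hk⟩ := ih
    refine ⟨-k, ?_⟩
    rw [map_inv, hk, mul_inv_rev, ← zpow_neg, b_zpow_central (-k) u⁻¹]

theorem psi2_eq (g : A) (hg : g ∈ Subgroup.closure ({ga, gc} : Set A)) :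
    ∃ k : ℤ, psi2 g = g * gb ^ k := by
  induction hg using Subgroup.closure_induction with
  | mem w hw =>
    rcases hw with rfl | rfl
    · exact ⟨0, by simp⟩
    · refine ⟨1, by rw [psi2_c, zpow_one, ← b_central gc]⟩
  | one => exact ⟨0, by simp⟩
  | mul u v _ _ ihu ihv =>
    obtain ⟨k, hk⟩ := ihu; obtain ⟨l, hl⟩ := ihv
    refine ⟨k + l, ?_⟩
    rw [map_mul, hk, hl]
    have h1 : u * gb ^ k * (v * gb ^ l) = u * (gb ^ k * v) * gb ^ l := by group
    rw [h1, b_zpow_central k v]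
    group
  | inv u _ ih =>
    obtain ⟨k, hk⟩ := ih
    refine ⟨-k, ?_⟩
    rw [map_inv, hk, mul_inv_rev, ← zpow_neg, b_zpow_central (-k) u⁻¹]

/-- `psi1` fixes commutators of elements of `⟨a, c⟩`. -/
theorem psi_fix (ψ : A →* A) (hψ : ∀ g ∈ Subgroup.closure ({ga, gc} : Set A),
      ∃ k : ℤ, ψ g = g * gb ^ k)
    {p q : A} (hp : p ∈ Subgroup.closure ({ga, gc} : Set A))
    (hq : q ∈ Subgroup.closure ({ga, gc} : Set A)) :
    ψ ⁅p, q⁆ = ⁅p, q⁆ := by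
  obtain ⟨k, hk⟩ := hψ p hp
  obtain ⟨l, hl⟩ := hψ q hq
  rw [map_commutatorElement, hk, hl, comm_central_left (b_zpow_central k),
    comm_central_right (b_zpow_central l)]

end AP3

end Aux

open AP3

/-- In `A(P₃)`: `⟨ab, c⟩ ∩ ⟨a, bc⟩ ∩ ⟨a, c⟩ = [⟨a, c⟩, ⟨a, c⟩]`. -/
theorem triple_intersection_eq_commutator :
    Subgroup.closure
        {PresentedGroup.of GenA.a * PresentedGroup.of GenA.b,
          (PresentedGroup.of GenA.c : PresentedGroup relsA)} ⊓
      Subgroup.closure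
        {PresentedGroup.of GenA.a,
          PresentedGroup.of GenA.b * PresentedGroup.of GenA.c} ⊓
      Subgroup.closure
        {PresentedGroup.of GenA.a, PresentedGroup.of GenA.c} =
      ⁅Subgroup.closure
          {PresentedGroup.of GenA.a, (PresentedGroup.of GenA.c : PresentedGroup relsA)},
        Subgroup.closure
          {PresentedGroup.of GenA.a, (PresentedGroup.of GenA.c : PresentedGroup relsA)}⁆ := by
  set H : Subgroup A := Subgroup.closure ({ga, gc} : Set A) with hH
  set T1 : Subgroup A := Subgroup.closure ({ga * gb, gc} : Set A) with hT1
  set T2 : Subgroup A := Subgroup.closure ({ga, gb * gc} : Set A) with hT2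
  have le1 : ⁅H, H⁆ ≤ T1 := by
    rw [Subgroup.commutator_le]
    intro p hp q hq
    have hfix : psi1 ⁅p, q⁆ = ⁅p, q⁆ := psi_fix psi1 psi1_eq hp hq
    have himg : ∀ g ∈ H, psi1 g ∈ T1 := by
      intro g hg
      have : H ≤ T1.comap psi1 := by
        rw [hH, Subgroup.closure_le]
        rintro w (rfl | rfl)
        · rw [SetLike.mem_coe, Subgroup.mem_comap, psi1_a]
          exact Subgroup.subset_closure (by left; rfl)
        · rw [SetLike.mem_coe, Subgroup.mem_comap, psi1_c]
          exact Subgroup.subset_closure (by right; rfl)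
      exact this hg
    rw [← hfix, map_commutatorElement, commutatorElement_def]
    exact mul_mem (mul_mem (mul_mem (himg p hp) (himg q hq))
      (inv_mem (himg p hp))) (inv_mem (himg q hq))
  have le2 : ⁅H, H⁆ ≤ T2 := by
    rw [Subgroup.commutator_le]
    intro p hp q hq
    have hfix : psi2 ⁅p, q⁆ = ⁅p, q⁆ := psi_fix psi2 psi2_eq hp hq
    have himg : ∀ g ∈ H, psi2 g ∈ T2 := by
      intro g hg
      have : H ≤ T2.comap psi2 := by
        rw [hH, Subgroup.closure_le]
        rintro w (rfl | rfl)
        · rw [SetLike.mem_coe, Subgroup.mem_comap, psi2_a]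
          exact Subgroup.subset_closure (by left; rfl)
        · rw [SetLike.mem_coe, Subgroup.mem_comap, psi2_c]
          exact Subgroup.subset_closure (by right; rfl)
      exact this hg
    rw [← hfix, map_commutatorElement, commutatorElement_def]
    exact mul_mem (mul_mem (mul_mem (himg p hp) (himg q hq))
      (inv_mem (himg p hp))) (inv_mem (himg q hq))
  have le3 : ⁅H, H⁆ ≤ H := by
    rw [Subgroup.commutator_le]
    intro p hp q hq
    rw [commutatorElement_def]
    exact mul_mem (mul_mem (mul_mem hp hq) (inv_mem hp)) (inv_mem hq)
  apply le_antisymm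
  · rintro g ⟨⟨hg1, hg2⟩, hg3⟩
    -- exponent sums vanish on the three subgroups
    have hAB : expHom vAB g = 1 := by
      have : T1 ≤ (expHom vAB).ker := by
        rw [hT1, Subgroup.closure_le]
        rintro w (rfl | rfl) <;>
          simp [SetLike.mem_coe, MonoidHom.mem_ker, vAB, ← ofAdd_add]
      exact this hg1
    have hBC : expHom vBC g = 1 := by
      have : T2 ≤ (expHom vBC).ker := by
        rw [hT2, Subgroup.closure_le]
        rintro w (rfl | rfl) <;>
          simp [SetLike.mem_coe, MonoidHom.mem_ker, vBC, ← ofAdd_add]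
      exact this hg2
    have hB : expHom vB g = 1 := by
      have : H ≤ (expHom vB).ker := by
        rw [hH, Subgroup.closure_le]
        rintro w (rfl | rfl) <;> simp [SetLike.mem_coe, MonoidHom.mem_ker, vB]
      exact this hg3
    -- hence the `a`- and `c`-exponent sums of `g` vanish
    have hidA : expHom vA = expHom vAB * expHom vB := by
      ext x
      cases x <;> simp [vA, vAB, vB, ← ofAdd_add]
    have hidC : expHom vC = (expHom vBC)⁻¹ * expHom vB := by
      ext x
      cases x <;> simp [vC, vBC, vB, ← ofAdd_add, ← ofAdd_neg]
    have hA : expHom vA g = 1 := by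
      rw [hidA, MonoidHom.mul_apply, hAB, hB, mul_one]
    have hC : expHom vC g = 1 := by
      rw [hidC, MonoidHom.mul_apply, MonoidHom.inv_apply, hBC, hB, inv_one, mul_one]
    exact AP3.mem_commutator_of_maps ga gc (expHom vA) (expHom vC)
      (by simp [vA]) (by simp [vA]) (by simp [vC]) (by simp [vC]) hg3 hA hC
  · exact le_inf (le_inf le1 le2) le3
end
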